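/- Take the square loss L_i(w) = ½(y_i − x_iᵀw)² of a linear model, and let ψ : ℝ^m → ℝ be differentiable and α-strongly convex. If 0 < η and η‖x_i‖² ≤ α for all i = 1, …, T, then for every parameter w and noise values v_i with y_i = x_iᵀw + v_i, the SMD iterates satisfy D_ψ(w, w_T) + (η/2) Σ_{i=1}^T (x_iᵀw − x_iᵀw_{i−1})² ≤ D_ψ(w, w_0) + (η/2) Σ_{i=1}^T v_i². -/
import Mathlib


open scoped RealInnerProductSpace

/-- Bregman-divergence-like quantity `D_g(u, u') = g(u) - g(u') - ∇g(u')ᵀ(u - u')` of a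
(not necessarily convex) function `g`. -/
noncomputable def Dbreg {m : ℕ} (g : EuclideanSpace ℝ (Fin m) → ℝ)
    (u u' : EuclideanSpace ℝ (Fin m)) : ℝ :=
  g u - g u' - ⟪gradient g u', u - u'⟫

section helpers

open InnerProductSpace

variable {E : Type*} [NormedAddCommGroup E] [InnerProductSpace ℝ E] [CompleteSpace E]

lemma hasGradientAt_half_normSq' (c : ℝ) (a : E) :
    HasGradientAt (fun x : E => c / 2 * ‖x‖ ^ 2) (c • a) a := by
  have h0 : HasFDerivAt (fun x : E => ⟪x, x⟫)
      ((fderivInnerCLM ℝ (a, a)).comp ((ContinuousLinearMap.id ℝ E).prod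
        (ContinuousLinearMap.id ℝ E))) a := by
    simpa using (hasFDerivAt_id a).inner ℝ (hasFDerivAt_id a)
  have h1 : HasFDerivAt (fun x : E => c / 2 * ⟪x, x⟫)
      ((c / 2) • ((fderivInnerCLM ℝ (a, a)).comp ((ContinuousLinearMap.id ℝ E).prod
        (ContinuousLinearMap.id ℝ E)))) a := h0.const_mul (c / 2)
  have heq : ((c / 2) • ((fderivInnerCLM ℝ (a, a)).comp ((ContinuousLinearMap.id ℝ E).prod
        (ContinuousLinearMap.id ℝ E)))) = InnerProductSpace.toDual ℝ E (c • a) := by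
    ext v
    simp [toDual_apply_apply, real_inner_smul_left, real_inner_comm a v]
    ring
  have h2 : HasFDerivAt (fun x : E => c / 2 * ⟪x, x⟫)
      (InnerProductSpace.toDual ℝ E (c • a)) a := by
    rw [← heq]; exact h1
  have h3 : (fun x : E => c / 2 * ‖x‖ ^ 2) = fun x : E => c / 2 * ⟪x, x⟫ := by
    funext x; rw [real_inner_self_eq_norm_sq]
  rw [HasGradientAt, HasGradientAtFilter, h3]
  exact h2

lemma convex_grad_le' {g : E → ℝ} (hgd : Differentiable ℝ g) (hgc : ConvexOn ℝ Set.univ g)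
    (a b : E) : ⟪gradient g a, b - a⟫ ≤ g b - g a := by
  have hφc : ConvexOn ℝ Set.univ (fun t : ℝ => g (a + t • (b - a))) := by
    have h := hgc.comp_affineMap (AffineMap.lineMap a b : ℝ →ᵃ[ℝ] E)
    have heq : (g ∘ (AffineMap.lineMap a b : ℝ →ᵃ[ℝ] E))
        = fun t : ℝ => g (a + t • (b - a)) := by
      funext t
      simp [AffineMap.lineMap_apply, add_comm]
    rw [heq, Set.preimage_univ] at h
    exact h
  have hline : HasDerivAt (fun t : ℝ => a + t • (b - a)) (b - a) 0 := by
    simpa using ((hasDerivAt_id (0 : ℝ)).smul_const (b - a)).const_add a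
  have hpt : a + (0 : ℝ) • (b - a) = a := by simp
  have hgf : HasFDerivAt g (fderiv ℝ g a) (a + (0 : ℝ) • (b - a)) := by
    rw [hpt]; exact (hgd a).hasFDerivAt
  have hφd : HasDerivAt (fun t : ℝ => g (a + t • (b - a))) ((fderiv ℝ g a) (b - a)) 0 :=
    hgf.comp_hasDerivAt 0 hline
  have hs := hφc.le_slope_of_hasDerivAt (Set.mem_univ (0 : ℝ)) (Set.mem_univ (1 : ℝ))
    one_pos hφd
  have hval : (fderiv ℝ g a) (b - a) = ⟪gradient g a, b - a⟫ := by
    rw [gradient, toDual_symm_apply]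
  have hslope : slope (fun t : ℝ => g (a + t • (b - a))) 0 1 = g b - g a := by
    rw [slope_def_field]
    simp
  rw [hval, hslope] at hs
  exact hs

lemma strong_grad_le' {α : ℝ} {ψ : E → ℝ} (hψ : Differentiable ℝ ψ)
    (hconv : StrongConvexOn Set.univ α ψ) (a b : E) :
    ψ a + ⟪gradient ψ a, b - a⟫ + α / 2 * ‖b - a‖ ^ 2 ≤ ψ b := by
  set g : E → ℝ := fun x => ψ x - α / 2 * ‖x‖ ^ 2 with hg
  have hgc : ConvexOn ℝ Set.univ g := strongConvexOn_iff_convex.mp hconv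
  have hg1 : HasGradientAt g (gradient ψ a - α • a) a := by
    rw [HasGradientAt, HasGradientAtFilter, map_sub]
    exact ((hψ a).hasGradientAt.hasFDerivAt).sub (hasGradientAt_half_normSq' α a).hasFDerivAt
  have hgd : Differentiable ℝ g := by
    intro z
    have hz : HasGradientAt g (gradient ψ z - α • z) z := by
      rw [HasGradientAt, HasGradientAtFilter, map_sub]
      exact ((hψ z).hasGradientAt.hasFDerivAt).sub (hasGradientAt_half_normSq' α z).hasFDerivAt
    exact hz.differentiableAt
  have h := convex_grad_le' hgd hgc a b
  rw [hg1.gradient] at h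
  have hin : ⟪gradient ψ a - α • a, b - a⟫ = ⟪gradient ψ a, b - a⟫ - α * ⟪a, b - a⟫ := by
    rw [inner_sub_left, real_inner_smul_left]
  have hexp : ‖b - a‖ ^ 2 = ‖b‖ ^ 2 - 2 * ⟪a, b⟫ + ‖a‖ ^ 2 := by
    rw [← real_inner_self_eq_norm_sq, ← real_inner_self_eq_norm_sq, ← real_inner_self_eq_norm_sq,
      inner_sub_sub_self]
    rw [real_inner_comm b a]
    ring
  have hin2 : ⟪a, b - a⟫ = ⟪a, b⟫ - ‖a‖ ^ 2 := by
    rw [inner_sub_right, real_inner_self_eq_norm_sq]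
  simp only [hg] at h
  rw [hin, hin2] at h
  rw [hexp]
  ring_nf
  ring_nf at h
  linarith

end helpers

lemma step_ineq' {m : ℕ} {α η : ℝ} {ψ : EuclideanSpace ℝ (Fin m) → ℝ}
    (hψ : Differentiable ℝ ψ) (hconv : StrongConvexOn Set.univ α ψ) (hη : 0 < η)
    (x : EuclideanSpace ℝ (Fin m)) (hx : η * ‖x‖ ^ 2 ≤ α)
    (a b wstar : EuclideanSpace ℝ (Fin m)) (v : ℝ)
    (hgrad : gradient ψ b = gradient ψ a + (η * ((⟪x, wstar⟫ - ⟪x, a⟫) + v)) • x) :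
    Dbreg ψ wstar b + η / 2 * (⟪x, wstar⟫ - ⟪x, a⟫) ^ 2
      ≤ Dbreg ψ wstar a + η / 2 * v ^ 2 := by
  have hsc := strong_grad_le' hψ hconv a b
  have hs0 : (0 : ℝ) ≤ ‖b - a‖ ^ 2 := sq_nonneg _
  have hcs : ⟪x, b - a⟫ ^ 2 ≤ ‖x‖ ^ 2 * ‖b - a‖ ^ 2 := by
    have h1 := abs_real_inner_le_norm x (b - a)
    nlinarith [abs_nonneg ⟪x, b - a⟫, sq_abs ⟪x, b - a⟫, norm_nonneg x, norm_nonneg (b - a)]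
  simp only [Dbreg, hgrad]
  rw [inner_add_left, real_inner_smul_left]
  have e1 : ⟪x, wstar - b⟫ = (⟪x, wstar⟫ - ⟪x, a⟫) - ⟪x, b - a⟫ := by
    rw [inner_sub_right, inner_sub_right]; ring
  have e2 : ⟪gradient ψ a, wstar - b⟫
      = ⟪gradient ψ a, wstar - a⟫ - ⟪gradient ψ a, b - a⟫ := by
    rw [inner_sub_right, inner_sub_right, inner_sub_right]; ring
  rw [e1, e2]
  nlinarith [mul_le_mul_of_nonneg_right hx hs0, mul_le_mul_of_nonneg_left hcs hη.le,
    sq_nonneg ((⟪x, wstar⟫ - ⟪x, a⟫) + v - ⟪x, b - a⟫), mul_pos hη hη]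

/-- Corollary 1, upper-bound part: SMD with an `α`-strongly convex
potential on the square loss of a linear model, with `η ‖x_i‖² ≤ α`, makes the
estimation-error energy at most the disturbance energy. The SMD iterates satisfy
`∇ψ(w_i) = ∇ψ(w_{i-1}) + η (y_i - x_iᵀw_{i-1}) x_i`. -/
theorem stmt_12 {m : ℕ} (T : ℕ) (hT : 1 ≤ T)
    (x : ℕ → EuclideanSpace ℝ (Fin m)) (y : ℕ → ℝ)
    (α : ℝ) (hα : 0 < α)
    (ψ : EuclideanSpace ℝ (Fin m) → ℝ) (hψ : Differentiable ℝ ψ)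
    (hψconv : StrongConvexOn Set.univ α ψ)
    (η : ℝ) (hη : 0 < η)
    (hstep : ∀ i ∈ Finset.range T, η * ‖x (i + 1)‖ ^ 2 ≤ α)
    (w₀ : EuclideanSpace ℝ (Fin m))
    (w : ℕ → EuclideanSpace ℝ (Fin m)) (hw0 : w 0 = w₀)
    (hupd : ∀ i : ℕ,
      gradient ψ (w (i + 1)) =
        gradient ψ (w i) + (η * (y (i + 1) - ⟪x (i + 1), w i⟫)) • x (i + 1))
    (wstar : EuclideanSpace ℝ (Fin m)) (v : ℕ → ℝ)
    (hdata : ∀ i : ℕ, y (i + 1) = ⟪x (i + 1), wstar⟫ + v (i + 1)) :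
    Dbreg ψ wstar (w T)
        + η / 2 * ∑ i ∈ Finset.range T, (⟪x (i + 1), wstar⟫ - ⟪x (i + 1), w i⟫) ^ 2
      ≤ Dbreg ψ wstar w₀ + η / 2 * ∑ i ∈ Finset.range T, v (i + 1) ^ 2 := by
  rw [← hw0]
  have key : ∀ n, n ≤ T →
      Dbreg ψ wstar (w n)
          + η / 2 * ∑ i ∈ Finset.range n, (⟪x (i + 1), wstar⟫ - ⟪x (i + 1), w i⟫) ^ 2
        ≤ Dbreg ψ wstar (w 0) + η / 2 * ∑ i ∈ Finset.range n, v (i + 1) ^ 2 := by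
    intro n
    induction n with
    | zero => simp
    | succ k ih =>
      intro hk
      have hkT : k < T := hk
      have ihk := ih hkT.le
      have hco : y (k + 1) - ⟪x (k + 1), w k⟫
          = (⟪x (k + 1), wstar⟫ - ⟪x (k + 1), w k⟫) + v (k + 1) := by
        rw [hdata k]; ring
      have hg := hupd k
      rw [hco] at hg
      have hstepk := hstep k (Finset.mem_range.mpr hkT)
      have hs := step_ineq' hψ hψconv hη (x (k + 1)) hstepk (w k) (w (k + 1)) wstar
        (v (k + 1)) hg
      rw [Finset.sum_range_succ, Finset.sum_range_succ]
      have hd2 : η / 2 * (∑ i ∈ Finset.range k,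
            (⟪x (i + 1), wstar⟫ - ⟪x (i + 1), w i⟫) ^ 2
          + (⟪x (k + 1), wstar⟫ - ⟪x (k + 1), w k⟫) ^ 2)
          = η / 2 * ∑ i ∈ Finset.range k, (⟪x (i + 1), wstar⟫ - ⟪x (i + 1), w i⟫) ^ 2
          + η / 2 * (⟪x (k + 1), wstar⟫ - ⟪x (k + 1), w k⟫) ^ 2 := by ring
      have hv2 : η / 2 * (∑ i ∈ Finset.range k, v (i + 1) ^ 2 + v (k + 1) ^ 2)
          = η / 2 * ∑ i ∈ Finset.range k, v (i + 1) ^ 2 + η / 2 * v (k + 1) ^ 2 := by ring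
      rw [hd2, hv2]
      linarith
  exact key T le_rfl
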